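/- (Imaginary time evolution in Pauli quantum computing.) Let P_{1,i}, P_{2,i}, P_i be unitary n-qubit matrices with P_i Hermitian, let λ_i ≥ 0, and let B be the linear map on ℂ^{2^n}⊗ℂ^{2^n} defined by B(|i⟩⊗|j⟩) = (H^{⊗n}|i⟩)⊗|i⊕j⟩. Suppose B (P_{1,i} ⊗ conj(P_{2,i})) B^{-1} = −I ⊗ P_i for every i. Then for the Lindbladian L[ρ] = Σ_i λ_i (F_i ρ F_i† − (1/2){ρ, F_i†F_i}) with F_i = diag(P_{1,i}, P_{2,i}) and any (1+n)-qubit matrix ρ with upper-right block S: B vec((⟨0|⊗I) L[ρ] (|1⟩⊗I)) = −(I ⊗ H_p + (Σ_i λ_i) I) · B vec(S), where H_p = Σ_i λ_i P_i. -/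

import Mathlib

open Matrix Kronecker BigOperators

/-- Bitstrings of length `n`. -/
abbrev BV (n : ℕ) : Type := Fin n → ZMod 2

/-- The `n`-fold Hadamard matrix `H^{⊗n}`, with entries `2^{-n/2} (-1)^{i·j}`. -/
noncomputable def Hn (n : ℕ) : Matrix (BV n) (BV n) ℂ :=
  Matrix.of fun i j => (Real.sqrt 2 : ℂ)⁻¹ ^ n * (-1 : ℂ) ^ (∑ k, i k * j k : ZMod 2).val

/-- Vectorization of an `n`-qubit matrix: `vec(O) = ∑_{i,j} O_{ij} |i⟩⊗|j⟩`. -/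
def vec {n : ℕ} (O : Matrix (BV n) (BV n) ℂ) : BV n × BV n → ℂ :=
  fun p => O p.1 p.2

/-- The linear map `B` with `B(|i⟩⊗|j⟩) = (H^{⊗n}|i⟩) ⊗ |i⊕j⟩`, as a matrix. -/
noncomputable def Bmat (n : ℕ) : Matrix (BV n × BV n) (BV n × BV n) ℂ :=
  Matrix.of fun p q => Hn n p.1 q.1 * (if p.2 = q.1 + q.2 then 1 else 0)

/-- The Lindbladian (with zero internal Hamiltonian)
`L[ρ] = ∑ i λᵢ (Fᵢ ρ Fᵢ† − (1/2){ρ, Fᵢ†Fᵢ})` with jump operators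
`Fᵢ = diag(P_{1,i}, P_{2,i})`. -/
noncomputable def lindblad {n : ℕ} {ι : Type} [Fintype ι]
    (P1 P2 : ι → Matrix (BV n) (BV n) ℂ) (lam : ι → ℝ)
    (ρ : Matrix (BV n ⊕ BV n) (BV n ⊕ BV n) ℂ) :
    Matrix (BV n ⊕ BV n) (BV n ⊕ BV n) ℂ :=
  ∑ i,
    (lam i : ℂ) •
      (Matrix.fromBlocks (P1 i) 0 0 (P2 i) * ρ *
          (Matrix.fromBlocks (P1 i) 0 0 (P2 i))ᴴ -
        (1 / 2 : ℂ) •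
          (ρ * ((Matrix.fromBlocks (P1 i) 0 0 (P2 i))ᴴ *
              Matrix.fromBlocks (P1 i) 0 0 (P2 i)) +
            ((Matrix.fromBlocks (P1 i) 0 0 (P2 i))ᴴ *
              Matrix.fromBlocks (P1 i) 0 0 (P2 i)) * ρ))

lemma vec_sub {n : ℕ} (A B : Matrix (BV n) (BV n) ℂ) : _root_.vec (A - B) = _root_.vec A - _root_.vec B := rfl

lemma vec_smul {n : ℕ} (c : ℂ) (A : Matrix (BV n) (BV n) ℂ) : _root_.vec (c • A) = c • _root_.vec A := rfl

lemma vec_sum {n : ℕ} {ι : Type} [Fintype ι] (f : ι → Matrix (BV n) (BV n) ℂ) :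
    _root_.vec (∑ i, f i) = ∑ i, _root_.vec (f i) := by
  funext p
  simp only [_root_.vec, Matrix.sum_apply, Finset.sum_apply]

lemma sum_mulVec' {ι m k : Type} [Fintype ι] [Fintype k] (M : ι → Matrix m k ℂ) (w : k → ℂ) :
    (∑ i, M i) *ᵥ w = ∑ i, M i *ᵥ w := by
  funext x
  simp only [Matrix.mulVec, dotProduct, Finset.sum_apply, Matrix.sum_apply,
    Finset.sum_mul]
  rw [Finset.sum_comm]

lemma mulVec_sum' {ι m k : Type} [Fintype ι] [Fintype k] (A : Matrix m k ℂ) (v : ι → k → ℂ) :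
    A *ᵥ (∑ i, v i) = ∑ i, A *ᵥ v i := by
  have h := map_sum A.mulVecLin v Finset.univ
  simp only [Matrix.mulVecLin_apply] at h
  exact h

lemma vec_mul_mul_conjTranspose {n : ℕ} (A B X : Matrix (BV n) (BV n) ℂ) :
    _root_.vec (A * X * Bᴴ) = (A ⊗ₖ B.map (starRingEnd ℂ)) *ᵥ _root_.vec X := by
  funext p
  simp only [Matrix.mulVec, dotProduct, Matrix.kroneckerMap_apply, _root_.vec,
    Matrix.mul_apply, Matrix.conjTranspose_apply, Matrix.map_apply, Fintype.sum_prod_type,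
    Finset.sum_mul]
  rw [Finset.sum_comm]
  refine Finset.sum_congr rfl fun l _ => Finset.sum_congr rfl fun k _ => ?_
  simp only [starRingEnd_apply]
  ring

lemma one_kron_sum {n : ℕ} {ι : Type} [Fintype ι] (c : ι → ℂ) (P : ι → Matrix (BV n) (BV n) ℂ) :
    (1 : Matrix (BV n) (BV n) ℂ) ⊗ₖ (∑ i, c i • P i)
      = ∑ i, c i • ((1 : Matrix (BV n) (BV n) ℂ) ⊗ₖ P i) := by
  ext p q
  simp only [Matrix.kroneckerMap_apply, Matrix.sum_apply, Matrix.smul_apply, Finset.mul_sum,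
    smul_eq_mul]
  exact Finset.sum_congr rfl fun i _ => by ring

/-- Imaginary time evolution in Pauli quantum computing: if
`B (P_{1,i} ⊗ conj(P_{2,i})) B⁻¹ = −I ⊗ Pᵢ` for all `i`, then the Lindbladian with
jump operators `Fᵢ = diag(P_{1,i}, P_{2,i})` acts, in the encoded picture, as
`B vec((⟨0|⊗I) L[ρ] (|1⟩⊗I)) = −(I ⊗ H_p + (∑ i λᵢ) I) · B vec(S)`,
where `H_p = ∑ i λᵢ Pᵢ` and `S` is the upper-right block of `ρ`. -/
theorem lindblad_imaginary_time_evolution {n : ℕ} {ι : Type} [Fintype ι]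
    (P1 P2 P : ι → Matrix (BV n) (BV n) ℂ)
    (hP1 : ∀ i, P1 i ∈ Matrix.unitaryGroup (BV n) ℂ)
    (hP2 : ∀ i, P2 i ∈ Matrix.unitaryGroup (BV n) ℂ)
    (hPu : ∀ i, P i ∈ Matrix.unitaryGroup (BV n) ℂ)
    (hPh : ∀ i, (P i).IsHermitian)
    (lam : ι → ℝ) (hlam : ∀ i, 0 ≤ lam i)
    (hB : ∀ i, Bmat n * (P1 i ⊗ₖ (P2 i).map (starRingEnd ℂ)) * (Bmat n)⁻¹
      = -((1 : Matrix (BV n) (BV n) ℂ) ⊗ₖ P i))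
    (ρ : Matrix (BV n ⊕ BV n) (BV n ⊕ BV n) ℂ) :
    (Bmat n).mulVec (_root_.vec (lindblad P1 P2 lam ρ).toBlocks₁₂)
      = (-((1 : Matrix (BV n) (BV n) ℂ) ⊗ₖ (∑ i, (lam i : ℂ) • P i) +
            (∑ i, (lam i : ℂ)) •
              (1 : Matrix (BV n × BV n) (BV n × BV n) ℂ))).mulVec
          ((Bmat n).mulVec (_root_.vec ρ.toBlocks₁₂)) := by
  classical
  have hFF : ∀ i, (Matrix.fromBlocks (P1 i) 0 0 (P2 i))ᴴ *
      Matrix.fromBlocks (P1 i) 0 0 (P2 i) = 1 := by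
    intro i
    have h1 : (P1 i)ᴴ * P1 i = 1 := by
      simpa [Matrix.star_eq_conjTranspose] using Matrix.mem_unitaryGroup_iff'.mp (hP1 i)
    have h2 : (P2 i)ᴴ * P2 i = 1 := by
      simpa [Matrix.star_eq_conjTranspose] using Matrix.mem_unitaryGroup_iff'.mp (hP2 i)
    rw [Matrix.fromBlocks_conjTranspose, Matrix.fromBlocks_multiply]
    simp [h1, h2]
  have hlin : lindblad P1 P2 lam ρ
      = ∑ i, (lam i : ℂ) • (Matrix.fromBlocks (P1 i) 0 0 (P2 i) * ρ *
          (Matrix.fromBlocks (P1 i) 0 0 (P2 i))ᴴ - ρ) := by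
    unfold lindblad
    refine Finset.sum_congr rfl fun i _ => ?_
    rw [hFF i, Matrix.mul_one, Matrix.one_mul]
    congr 1
    rw [← two_smul ℂ ρ, smul_smul]
    norm_num
  have hconjM : ∀ i, (Matrix.fromBlocks (P1 i) 0 0 (P2 i) * ρ *
      (Matrix.fromBlocks (P1 i) 0 0 (P2 i))ᴴ).toBlocks₁₂
      = P1 i * ρ.toBlocks₁₂ * (P2 i)ᴴ := by
    intro i
    conv_lhs => rw [← Matrix.fromBlocks_toBlocks ρ]
    rw [Matrix.fromBlocks_conjTranspose, Matrix.fromBlocks_multiply,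
      Matrix.fromBlocks_multiply, Matrix.toBlocks_fromBlocks₁₂]
    simp
  have tb : ∀ (M : Matrix (BV n ⊕ BV n) (BV n ⊕ BV n) ℂ) a b,
      M.toBlocks₁₂ a b = M (Sum.inl a) (Sum.inr b) := fun _ _ _ => rfl
  have hblock : (lindblad P1 P2 lam ρ).toBlocks₁₂
      = ∑ i, (lam i : ℂ) • (P1 i * ρ.toBlocks₁₂ * (P2 i)ᴴ - ρ.toBlocks₁₂) := by
    rw [hlin]
    ext a b
    rw [tb]
    simp only [Matrix.sum_apply, Matrix.smul_apply, Matrix.sub_apply, smul_eq_mul]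
    refine Finset.sum_congr rfl fun i _ => ?_
    congr 1
    rw [← hconjM i]
    rfl
  have hB' : ∀ i, Bmat n * (P1 i ⊗ₖ (P2 i).map (starRingEnd ℂ))
      = -((1 : Matrix (BV n) (BV n) ℂ) ⊗ₖ P i) * Bmat n := by
    intro i
    by_cases hdet : IsUnit (Bmat n).det
    · have h := congrArg (· * Bmat n) (hB i)
      simpa [Matrix.mul_assoc, Matrix.nonsing_inv_mul _ hdet] using h
    · exfalso
      have hinv : (Bmat n)⁻¹ = 0 := by
        rw [Matrix.inv_def, Ring.inverse_non_unit _ hdet, zero_smul]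
      have h := hB i
      rw [hinv, Matrix.mul_zero] at h
      have hP0 : P i = 0 := by
        ext a b
        have h2 : (0 : Matrix (BV n × BV n) (BV n × BV n) ℂ) (default, a) (default, b)
            = (-((1 : Matrix (BV n) (BV n) ℂ) ⊗ₖ P i)) (default, a) (default, b) := by
          rw [← h]
        simpa [Matrix.kroneckerMap_apply, Matrix.one_apply] using h2
      have h1 : (P i)ᴴ * P i = 1 := by
        simpa [Matrix.star_eq_conjTranspose] using Matrix.mem_unitaryGroup_iff'.mp (hPu i)
      rw [hP0, Matrix.mul_zero] at h1
      have h3 : (0 : Matrix (BV n) (BV n) ℂ) default default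
          = (1 : Matrix (BV n) (BV n) ℂ) default default := by rw [h1]
      simp [Matrix.one_apply] at h3
  have key : ∀ i, Bmat n *ᵥ _root_.vec ((lam i : ℂ) • (P1 i * ρ.toBlocks₁₂ * (P2 i)ᴴ - ρ.toBlocks₁₂))
      = (lam i : ℂ) • ((-((1 : Matrix (BV n) (BV n) ℂ) ⊗ₖ P i) - 1) *ᵥ
          (Bmat n *ᵥ _root_.vec ρ.toBlocks₁₂)) := by
    intro i
    rw [vec_smul, vec_sub, Matrix.mulVec_smul, Matrix.mulVec_sub,
      vec_mul_mul_conjTranspose, Matrix.mulVec_mulVec, hB' i, ← Matrix.mulVec_mulVec,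
      Matrix.sub_mulVec, Matrix.one_mulVec]
  have hM : -((1 : Matrix (BV n) (BV n) ℂ) ⊗ₖ (∑ i, (lam i : ℂ) • P i) +
        (∑ i, (lam i : ℂ)) • (1 : Matrix (BV n × BV n) (BV n × BV n) ℂ))
      = ∑ i, (lam i : ℂ) • (-((1 : Matrix (BV n) (BV n) ℂ) ⊗ₖ P i) - 1) := by
    rw [one_kron_sum, Finset.sum_smul]
    simp only [smul_sub, smul_neg, Finset.sum_sub_distrib, Finset.sum_neg_distrib]
    abel
  rw [hblock, _root_.vec_sum, mulVec_sum', hM, sum_mulVec']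
  refine Finset.sum_congr rfl fun i _ => ?_
  rw [key i, Matrix.smul_mulVec]
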